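/- Let η ∈ ℝ, η ≠ 0, and let z, ρ : ℝ² → ℝ be smooth (C^∞) functions of (x,t) satisfying the short-pulse equation z_xt = (1/2) z² z_xx + z z_x² + z together with the Riccati system ρ_x = −(z_x/(4η)) ρ² + (1/(2η)) ρ + z_x/(4η) and ρ_t = −(z(z z_x + 4η)/(8η)) ρ² + ((8η² + z²)/(4η)) ρ − z(−z z_x + 4η)/(8η). Define ξ(x,t) := x + 8η/(ρ(x,t)² + 1), and suppose w : ℝ² → ℝ is a smooth function such that w(ξ(x,t), t) = −z(x,t) + 8η ρ(x,t)/(ρ(x,t)² + 1) for all (x,t) and such that ∂_x ξ(x,t) ≠ 0 for all (x,t). Then at every point of the form (ξ(x,t), t), the function w satisfies the short-pulse equation w_xt = (1/2) w² w_xx + w w_x² + w. -/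

import Mathlib

/-- Partial derivative in the first variable `x`. -/
noncomputable def px (f : ℝ → ℝ → ℝ) : ℝ → ℝ → ℝ := fun x t => deriv (fun y => f y t) x

/-- Partial derivative in the second variable `t`. -/
noncomputable def pt (f : ℝ → ℝ → ℝ) : ℝ → ℝ → ℝ := fun x t => deriv (fun s => f x s) t

open Function


theorem hasDerivAt_congr_deriv {f : ℝ → ℝ} {a b x : ℝ} (h : HasDerivAt f a x) (hab : a = b) :
    HasDerivAt f b x := hab ▸ h

theorem px_eq_fderiv (f : ℝ → ℝ → ℝ) (hf : ContDiff ℝ (⊤ : ℕ∞) (uncurry f)) (x t : ℝ) :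
    px f x t = fderiv ℝ (uncurry f) (x, t) (1, 0) := by
  have hg : HasDerivAt (fun y : ℝ => (y, t)) ((1 : ℝ), (0 : ℝ)) x :=
    (hasDerivAt_id x).prodMk (hasDerivAt_const x t)
  have h := ((hf.differentiable (by simp)) (x, t)).hasFDerivAt.comp_hasDerivAt x hg
  exact h.deriv ▸ rfl

theorem pt_eq_fderiv (f : ℝ → ℝ → ℝ) (hf : ContDiff ℝ (⊤ : ℕ∞) (uncurry f)) (x t : ℝ) :
    pt f x t = fderiv ℝ (uncurry f) (x, t) (0, 1) := by
  have hg : HasDerivAt (fun s : ℝ => (x, s)) ((0 : ℝ), (1 : ℝ)) t :=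
    (hasDerivAt_const t x).prodMk (hasDerivAt_id t)
  have h := ((hf.differentiable (by simp)) (x, t)).hasFDerivAt.comp_hasDerivAt t hg
  exact h.deriv ▸ rfl

theorem hasDerivAt_px_of (f : ℝ → ℝ → ℝ) (hf : ContDiff ℝ (⊤ : ℕ∞) (uncurry f)) (x t : ℝ) :
    HasDerivAt (fun y => f y t) (px f x t) x := by
  have hg : HasDerivAt (fun y : ℝ => (y, t)) ((1 : ℝ), (0 : ℝ)) x :=
    (hasDerivAt_id x).prodMk (hasDerivAt_const x t)
  have h := ((hf.differentiable (by simp)) (x, t)).hasFDerivAt.comp_hasDerivAt x hg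
  exact hasDerivAt_congr_deriv h (px_eq_fderiv f hf x t).symm

theorem hasDerivAt_pt_of (f : ℝ → ℝ → ℝ) (hf : ContDiff ℝ (⊤ : ℕ∞) (uncurry f)) (x t : ℝ) :
    HasDerivAt (fun s => f x s) (pt f x t) t := by
  have hg : HasDerivAt (fun s : ℝ => (x, s)) ((0 : ℝ), (1 : ℝ)) t :=
    (hasDerivAt_const t x).prodMk (hasDerivAt_id t)
  have h := ((hf.differentiable (by simp)) (x, t)).hasFDerivAt.comp_hasDerivAt t hg
  exact hasDerivAt_congr_deriv h (pt_eq_fderiv f hf x t).symm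

theorem contDiff_px_of (f : ℝ → ℝ → ℝ) (hf : ContDiff ℝ (⊤ : ℕ∞) (uncurry f)) :
    ContDiff ℝ (⊤ : ℕ∞) (uncurry (px f)) := by
  have key : uncurry (px f) = fun p : ℝ × ℝ => fderiv ℝ (uncurry f) p ((1 : ℝ), (0 : ℝ)) := by
    funext p
    exact px_eq_fderiv f hf p.1 p.2
  rw [key]
  exact (hf.fderiv_right (by exact_mod_cast le_top)).clm_apply contDiff_const

theorem contDiff_pt_of (f : ℝ → ℝ → ℝ) (hf : ContDiff ℝ (⊤ : ℕ∞) (uncurry f)) :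
    ContDiff ℝ (⊤ : ℕ∞) (uncurry (pt f)) := by
  have key : uncurry (pt f) = fun p : ℝ × ℝ => fderiv ℝ (uncurry f) p ((0 : ℝ), (1 : ℝ)) := by
    funext p
    exact pt_eq_fderiv f hf p.1 p.2
  rw [key]
  exact (hf.fderiv_right (by exact_mod_cast le_top)).clm_apply contDiff_const

theorem hasDerivAt_comp_x (g : ℝ → ℝ → ℝ) (hg : ContDiff ℝ (⊤ : ℕ∞) (uncurry g))
    (φ : ℝ → ℝ) (c x t : ℝ) (hφ : HasDerivAt φ c x) :
    HasDerivAt (fun y => g (φ y) t) (px g (φ x) t * c) x :=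
  (hasDerivAt_px_of g hg (φ x) t).comp x hφ

theorem hasDerivAt_comp_t (g : ℝ → ℝ → ℝ) (hg : ContDiff ℝ (⊤ : ℕ∞) (uncurry g))
    (φ : ℝ → ℝ) (c t : ℝ) (hφ : HasDerivAt φ c t) :
    HasDerivAt (fun s => g (φ s) s) (px g (φ t) t * c + pt g (φ t) t) t := by
  have hp : HasDerivAt (fun s => (φ s, s)) (c, (1 : ℝ)) t := hφ.prodMk (hasDerivAt_id t)
  have hL := ((hg.differentiable (by simp)) (φ t, t)).hasFDerivAt
  have h : HasDerivAt (fun s => uncurry g (φ s, s)) (fderiv ℝ (uncurry g) (φ t, t) (c, 1)) t :=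
    hL.comp_hasDerivAt t (f := fun s => (φ s, s)) hp
  refine hasDerivAt_congr_deriv h ?_
  have h10 := px_eq_fderiv g hg (φ t) t
  have h01 := pt_eq_fderiv g hg (φ t) t
  have hv : ((c : ℝ), (1 : ℝ)) = c • ((1 : ℝ), (0 : ℝ)) + ((0 : ℝ), (1 : ℝ)) := by
    simp
  rw [hv, map_add, map_smul, h10, h01]
  simp [mul_comm]

set_option maxHeartbeats 4000000 in
/-- the auto-Bäcklund transformation
`x' = x + 8η/(ρ²+1)`, `t' = t`, `z' = −z + 8ηρ/(ρ²+1)` of the short-pulse equation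
`z_xt = (1/2)z²z_xx + zz_x² + z`: if `w` is a smooth function matching `z'` along
the transformed variable `ξ = x + 8η/(ρ²+1)` with `∂_x ξ ≠ 0`, then `w` satisfies
the short-pulse equation at every point `(ξ(x,t), t)`. -/
theorem short_pulse_auto_backlund (η : ℝ) (hη : η ≠ 0) (z ρ w : ℝ → ℝ → ℝ)
    (hz : ContDiff ℝ (⊤ : ℕ∞) (Function.uncurry z))
    (hρ : ContDiff ℝ (⊤ : ℕ∞) (Function.uncurry ρ))
    (hw : ContDiff ℝ (⊤ : ℕ∞) (Function.uncurry w))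
    (hsp : ∀ x t, pt (px z) x t
      = (1 / 2) * (z x t) ^ 2 * px (px z) x t + z x t * (px z x t) ^ 2 + z x t)
    (hρx : ∀ x t, px ρ x t
      = -(px z x t / (4 * η)) * (ρ x t) ^ 2 + (1 / (2 * η)) * ρ x t
        + px z x t / (4 * η))
    (hρt : ∀ x t, pt ρ x t
      = -(z x t * (z x t * px z x t + 4 * η) / (8 * η)) * (ρ x t) ^ 2
        + ((8 * η ^ 2 + (z x t) ^ 2) / (4 * η)) * ρ x t
        - z x t * (-(z x t) * px z x t + 4 * η) / (8 * η))
    (ξ : ℝ → ℝ → ℝ)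
    (hξ : ∀ x t, ξ x t = x + 8 * η / ((ρ x t) ^ 2 + 1))
    (hwz : ∀ x t, w (ξ x t) t = -(z x t) + 8 * η * ρ x t / ((ρ x t) ^ 2 + 1))
    (hreg : ∀ x t, px ξ x t ≠ 0) :
    ∀ x t,
      pt (px w) (ξ x t) t
        = (1 / 2) * (w (ξ x t) t) ^ 2 * px (px w) (ξ x t) t
          + w (ξ x t) t * (px w (ξ x t) t) ^ 2 + w (ξ x t) t := by
  have hA : ∀ x t : ℝ, (ρ x t) ^ 2 + 1 ≠ 0 := fun x t => by positivity
  have hzxC := contDiff_px_of z hz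
  have hρxC := contDiff_px_of ρ hρ
  have hwxC := contDiff_px_of w hw
  have Dz : ∀ x t : ℝ, HasDerivAt (fun y => z y t) (px z x t) x := hasDerivAt_px_of z hz
  have Dr : ∀ x t : ℝ, HasDerivAt (fun y => ρ y t) (px ρ x t) x := hasDerivAt_px_of ρ hρ
  have Drt : ∀ x t : ℝ, HasDerivAt (fun s => ρ x s) (pt ρ x t) t := hasDerivAt_pt_of ρ hρ
  have Dzx : ∀ x t : ℝ, HasDerivAt (fun y => px z y t) (px (px z) x t) x :=
    hasDerivAt_px_of _ hzxC
  have Dzxt : ∀ x t : ℝ, HasDerivAt (fun s => px z x s) (pt (px z) x t) t :=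
    hasDerivAt_pt_of _ hzxC
  have Drx : ∀ x t : ℝ, HasDerivAt (fun y => px ρ y t) (px (px ρ) x t) x :=
    hasDerivAt_px_of _ hρxC
  have Drxt : ∀ x t : ℝ, HasDerivAt (fun s => px ρ x s) (pt (px ρ) x t) t :=
    hasDerivAt_pt_of _ hρxC
  have Dden : ∀ x t : ℝ, HasDerivAt (fun y => (ρ y t) ^ 2 + 1) (2 * (ρ x t * px ρ x t)) x := by
    intro x t
    exact hasDerivAt_congr_deriv (((Dr x t).pow 2).add_const 1) (by norm_num; ring)
  have Ddent : ∀ x t : ℝ, HasDerivAt (fun s => (ρ x s) ^ 2 + 1) (2 * (ρ x t * pt ρ x t)) t := by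
    intro x t
    exact hasDerivAt_congr_deriv (((Drt x t).pow 2).add_const 1) (by norm_num; ring)
  have DXi : ∀ x t : ℝ, HasDerivAt (fun y => ξ y t)
      (1 - 16 * η * (ρ x t * px ρ x t) / ((ρ x t) ^ 2 + 1) ^ 2) x := by
    intro x t
    have h : (fun y => ξ y t) = fun y => y + 8 * η / ((ρ y t) ^ 2 + 1) :=
      funext fun y => hξ y t
    rw [h]
    refine hasDerivAt_congr_deriv
      ((hasDerivAt_id x).add ((hasDerivAt_const x (8 * η)).div (Dden x t) (hA x t))) ?_
    field_simp
    ring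
  have DXit : ∀ x t : ℝ, HasDerivAt (fun s => ξ x s)
      (-(16 * η) * (ρ x t * pt ρ x t) / ((ρ x t) ^ 2 + 1) ^ 2) t := by
    intro x t
    have h : (fun s => ξ x s) = fun s => x + 8 * η / ((ρ x s) ^ 2 + 1) :=
      funext fun s => hξ x s
    rw [h]
    refine hasDerivAt_congr_deriv
      ((hasDerivAt_const t x).add ((hasDerivAt_const t (8 * η)).div (Ddent x t) (hA x t))) ?_
    field_simp
    ring
  have hrxx : ∀ x t : ℝ, px (px ρ) x t
      = -(px (px z) x t / (4 * η)) * ρ x t ^ 2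
        - px z x t / (4 * η) * (2 * (ρ x t * px ρ x t))
        + 1 / (2 * η) * px ρ x t + px (px z) x t / (4 * η) := by
    intro x t
    have h : (fun y => px ρ y t)
        = fun y => -(px z y t / (4 * η)) * ρ y t ^ 2 + 1 / (2 * η) * ρ y t
          + px z y t / (4 * η) := funext fun y => hρx y t
    have hL := Drx x t
    rw [h] at hL
    have hR := ((((Dzx x t).div_const (4 * η)).neg.mul ((Dr x t).pow 2)).add
        ((Dr x t).const_mul (1 / (2 * η)))).add ((Dzx x t).div_const (4 * η))
    have e := hL.unique hR
    rw [e]; norm_num; ring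
  have hrxt : ∀ x t : ℝ, pt (px ρ) x t
      = -(pt (px z) x t / (4 * η)) * ρ x t ^ 2
        - px z x t / (4 * η) * (2 * (ρ x t * pt ρ x t))
        + 1 / (2 * η) * pt ρ x t + pt (px z) x t / (4 * η) := by
    intro x t
    have h : (fun s => px ρ x s)
        = fun s => -(px z x s / (4 * η)) * ρ x s ^ 2 + 1 / (2 * η) * ρ x s
          + px z x s / (4 * η) := funext fun s => hρx x s
    have hL := Drxt x t
    rw [h] at hL
    have hR := ((((Dzxt x t).div_const (4 * η)).neg.mul ((Drt x t).pow 2)).add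
        ((Drt x t).const_mul (1 / (2 * η)))).add ((Dzxt x t).div_const (4 * η))
    have e := hL.unique hR
    rw [e]; norm_num; ring
  have K1 : ∀ x t : ℝ, px w (ξ x t) t * (((ρ x t) ^ 2 + 1) ^ 2 - 16 * η * (ρ x t * px ρ x t))
      = -(px z x t) * ((ρ x t) ^ 2 + 1) ^ 2 + 8 * η * (px ρ x t * (1 - (ρ x t) ^ 2)) := by
    intro x t
    have hL : HasDerivAt (fun y => w (ξ y t) t)
        (px w (ξ x t) t * (1 - 16 * η * (ρ x t * px ρ x t) / ((ρ x t) ^ 2 + 1) ^ 2)) x :=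
      hasDerivAt_comp_x w hw _ _ x t (DXi x t)
    have h : (fun y => w (ξ y t) t)
        = fun y => -(z y t) + 8 * η * ρ y t / ((ρ y t) ^ 2 + 1) := funext fun y => hwz y t
    rw [h] at hL
    have hR := ((Dz x t).neg).add (((Dr x t).const_mul (8 * η)).div (Dden x t) (hA x t))
    have e := hL.unique hR
    field_simp [hA x t] at e
    linear_combination e
  have K2 : ∀ x t : ℝ,
      px (px w) (ξ x t) t * (((ρ x t) ^ 2 + 1) ^ 2 - 16 * η * (ρ x t * px ρ x t)) ^ 2
        + px w (ξ x t) t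
          * (4 * (((ρ x t) ^ 2 + 1) * (ρ x t * px ρ x t))
            - 16 * η * ((px ρ x t) ^ 2 + ρ x t * px (px ρ) x t)) * ((ρ x t) ^ 2 + 1) ^ 2
      = (-(px (px z) x t) * ((ρ x t) ^ 2 + 1) ^ 2
          - px z x t * (4 * (((ρ x t) ^ 2 + 1) * (ρ x t * px ρ x t)))
          + 8 * η * (px (px ρ) x t * (1 - (ρ x t) ^ 2) - 2 * ρ x t * (px ρ x t) ^ 2))
        * ((ρ x t) ^ 2 + 1) ^ 2 := by
    intro x t
    have hfun : (fun y => px w (ξ y t) t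
          * (((ρ y t) ^ 2 + 1) ^ 2 - 16 * η * (ρ y t * px ρ y t)))
        = fun y => -(px z y t) * ((ρ y t) ^ 2 + 1) ^ 2
          + 8 * η * (px ρ y t * (1 - (ρ y t) ^ 2)) := funext fun y => K1 y t
    have hΦ : HasDerivAt (fun y => px w (ξ y t) t)
        (px (px w) (ξ x t) t * (1 - 16 * η * (ρ x t * px ρ x t) / ((ρ x t) ^ 2 + 1) ^ 2)) x :=
      hasDerivAt_comp_x (px w) hwxC _ _ x t (DXi x t)
    have hN : HasDerivAt (fun y => ((ρ y t) ^ 2 + 1) ^ 2 - 16 * η * (ρ y t * px ρ y t))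
        (2 * ((ρ x t) ^ 2 + 1) ^ 1 * (2 * (ρ x t * px ρ x t))
          - 16 * η * (px ρ x t * px ρ x t + ρ x t * px (px ρ) x t)) x :=
      ((Dden x t).pow 2).sub (((Dr x t).mul (Drx x t)).const_mul (16 * η))
    have hL : HasDerivAt (fun y => px w (ξ y t) t
          * (((ρ y t) ^ 2 + 1) ^ 2 - 16 * η * (ρ y t * px ρ y t))) _ x := hΦ.mul hN
    rw [hfun] at hL
    have hR := (((Dzx x t).neg).mul ((Dden x t).pow 2)).add
      (((Drx x t).mul (((Dr x t).pow 2).const_sub 1)).const_mul (8 * η))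
    have e := hL.unique hR
    simp only [Pi.neg_apply, Pi.pow_apply] at e
    field_simp [hA x t] at e
    linear_combination e
  have K3 : ∀ x t : ℝ,
      (px (px w) (ξ x t) t * (-(16 * η) * (ρ x t * pt ρ x t))
          + pt (px w) (ξ x t) t * ((ρ x t) ^ 2 + 1) ^ 2)
        * (((ρ x t) ^ 2 + 1) ^ 2 - 16 * η * (ρ x t * px ρ x t))
        + px w (ξ x t) t
          * (4 * (((ρ x t) ^ 2 + 1) * (ρ x t * pt ρ x t))
            - 16 * η * (pt ρ x t * px ρ x t + ρ x t * pt (px ρ) x t)) * ((ρ x t) ^ 2 + 1) ^ 2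
      = (-(pt (px z) x t) * ((ρ x t) ^ 2 + 1) ^ 2
          - px z x t * (4 * (((ρ x t) ^ 2 + 1) * (ρ x t * pt ρ x t)))
          + 8 * η * (pt (px ρ) x t * (1 - (ρ x t) ^ 2) - 2 * ρ x t * (px ρ x t * pt ρ x t)))
        * ((ρ x t) ^ 2 + 1) ^ 2 := by
    intro x t
    have hfun : (fun s => px w (ξ x s) s
          * (((ρ x s) ^ 2 + 1) ^ 2 - 16 * η * (ρ x s * px ρ x s)))
        = fun s => -(px z x s) * ((ρ x s) ^ 2 + 1) ^ 2
          + 8 * η * (px ρ x s * (1 - (ρ x s) ^ 2)) := funext fun s => K1 x s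
    have hΦ : HasDerivAt (fun s => px w (ξ x s) s)
        (px (px w) (ξ x t) t * (-(16 * η) * (ρ x t * pt ρ x t) / ((ρ x t) ^ 2 + 1) ^ 2)
          + pt (px w) (ξ x t) t) t :=
      hasDerivAt_comp_t (px w) hwxC (fun s => ξ x s) _ t (DXit x t)
    have hN : HasDerivAt (fun s => ((ρ x s) ^ 2 + 1) ^ 2 - 16 * η * (ρ x s * px ρ x s))
        (2 * ((ρ x t) ^ 2 + 1) ^ 1 * (2 * (ρ x t * pt ρ x t))
          - 16 * η * (pt ρ x t * px ρ x t + ρ x t * pt (px ρ) x t)) t :=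
      ((Ddent x t).pow 2).sub (((Drt x t).mul (Drxt x t)).const_mul (16 * η))
    have hL : HasDerivAt (fun s => px w (ξ x s) s
          * (((ρ x s) ^ 2 + 1) ^ 2 - 16 * η * (ρ x s * px ρ x s))) _ t := hΦ.mul hN
    rw [hfun] at hL
    have hR := (((Dzxt x t).neg).mul ((Ddent x t).pow 2)).add
      (((Drxt x t).mul (((Drt x t).pow 2).const_sub 1)).const_mul (8 * η))
    have e := hL.unique hR
    simp only [Pi.neg_apply, Pi.pow_apply] at e
    field_simp [hA x t] at e
    linear_combination e
  intro x t
  have hNe : (((ρ x t) ^ 2 + 1) ^ 2 - 16 * η * (ρ x t * px ρ x t)) ≠ 0 := by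
    have h0 := hreg x t
    have h1 : px ξ x t = 1 - 16 * η * (ρ x t * px ρ x t) / ((ρ x t) ^ 2 + 1) ^ 2 := by
      simp only [px]; exact (DXi x t).deriv
    rw [h1] at h0
    intro hcon
    apply h0
    have hE2 : (1 : ℝ) - 16 * η * (ρ x t * px ρ x t) / ((ρ x t) ^ 2 + 1) ^ 2
        = (((ρ x t) ^ 2 + 1) ^ 2 - 16 * η * (ρ x t * px ρ x t)) / ((ρ x t) ^ 2 + 1) ^ 2 := by
      field_simp
    rw [hE2, hcon, zero_div]
  have hb2 : px (px w) (ξ x t) t * (((ρ x t) ^ 2 + 1) ^ 2 - 16 * η * (ρ x t * px ρ x t)) ^ 3 = ((-(px (px z) x t) * ((ρ x t) ^ 2 + 1) ^ 2 - px z x t * (4 * (((ρ x t) ^ 2 + 1) * (ρ x t * px ρ x t))) + 8 * η * (px (px ρ) x t * (1 - (ρ x t) ^ 2) - 2 * ρ x t * (px ρ x t) ^ 2)) * ((ρ x t) ^ 2 + 1) ^ 2 * (((ρ x t) ^ 2 + 1) ^ 2 - 16 * η * (ρ x t * px ρ x t)) - (-(px z x t) * ((ρ x t) ^ 2 + 1)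 ^ 2 + 8 * η * (px ρ x t * (1 - (ρ x t) ^ 2))) * (4 * (((ρ x t) ^ 2 + 1) * (ρ x t * px ρ x t)) - 16 * η * ((px ρ x t) ^ 2 + ρ x t * px (px ρ) x t)) * ((ρ x t) ^ 2 + 1) ^ 2) := by
    linear_combination (((ρ x t) ^ 2 + 1) ^ 2 - 16 * η * (ρ x t * px ρ x t)) * (K2 x t) - (4 * (((ρ x t) ^ 2 + 1) * (ρ x t * px ρ x t)) - 16 * η * ((px ρ x t) ^ 2 + ρ x t * px (px ρ) x t)) * ((ρ x t) ^ 2 + 1) ^ 2 * (K1 x t)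
  have hc2 : pt (px w) (ξ x t) t * (((ρ x t) ^ 2 + 1) ^ 2 * (((ρ x t) ^ 2 + 1) ^ 2 - 16 * η * (ρ x t * px ρ x t)) ^ 3) = ((-(pt (px z) x t) * ((ρ x t) ^ 2 + 1) ^ 2 - px z x t * (4 * (((ρ x t) ^ 2 + 1) * (ρ x t * pt ρ x t))) + 8 * η * (pt (px ρ) x t * (1 - (ρ x t) ^ 2) - 2 * ρ x t * (px ρ x t * pt ρ x t))) * ((ρ x t) ^ 2 + 1) ^ 2 * (((ρ x t) ^ 2 + 1) ^ 2 - 16 * η * (ρ x t * px ρ x t)) ^ 2 - (-(px z x t) * ((ρ x t) ^ 2 + 1) ^ 2 + 8 * η * (px ρ x t * (1 - (ρ x t) ^ 2))) * (4 * (((ρ x t) ^ 2 + 1) * (ρ x t * pt ρ x t)) - 16 * η * (pt ρ x t * px ρ x t + ρ x t * pt (px ρ) x t)) * ((ρ x t) ^ 2 + 1) ^ 2 * (((ρ x t) ^ 2 + 1) ^ 2 - 16 * η * (ρ x t * px ρ x t)) - (-(16 * η) * (ρ x t * pt ρ x t)) * ((-(px (px z) x t) * ((ρ x t) ^ 2 +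 1) ^ 2 - px z x t * (4 * (((ρ x t) ^ 2 + 1) * (ρ x t * px ρ x t))) + 8 * η * (px (px ρ) x t * (1 - (ρ x t) ^ 2) - 2 * ρ x t * (px ρ x t) ^ 2)) * ((ρ x t) ^ 2 + 1) ^ 2 * (((ρ x t) ^ 2 + 1) ^ 2 - 16 * η * (ρ x t * px ρ x t)) - (-(px z x t) * ((ρ x t) ^ 2 + 1) ^ 2 + 8 * η * (px ρ x t * (1 - (ρ x t) ^ 2))) * (4 * (((ρ x t) ^ 2 + 1) * (ρ x t * px ρ x t)) - 16 * η * ((px ρ x t) ^ 2 + ρ x t * px (px ρ) x t)) * ((ρ x t) ^ 2 + 1) ^ 2)) := by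
    linear_combination (((ρ x t) ^ 2 + 1) ^ 2 - 16 * η * (ρ x t * px ρ x t)) ^ 2 * (K3 x t) - (4 * (((ρ x t) ^ 2 + 1) * (ρ x t * pt ρ x t)) - 16 * η * (pt ρ x t * px ρ x t + ρ x t * pt (px ρ) x t)) * ((ρ x t) ^ 2 + 1) ^ 2 * (((ρ x t) ^ 2 + 1) ^ 2 - 16 * η * (ρ x t * px ρ x t)) * (K1 x t) - (-(16 * η) * (ρ x t * pt ρ x t)) * hb2
  have hW : w (ξ x t) t * ((ρ x t) ^ 2 + 1) = (-(z x t) * ((ρ x t) ^ 2 + 1) + 8 * η * ρ x t) := by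
    rw [hwz x t]
    field_simp
  have key : ((-(pt (px z) x t) * ((ρ x t) ^ 2 + 1) ^ 2 - px z x t * (4 * (((ρ x t) ^ 2 + 1) * (ρ x t * pt ρ x t))) + 8 * η * (pt (px ρ) x t * (1 - (ρ x t) ^ 2) - 2 * ρ x t * (px ρ x t * pt ρ x t))) * ((ρ x t) ^ 2 + 1) ^ 2 * (((ρ x t) ^ 2 + 1) ^ 2 - 16 * η * (ρ x t * px ρ x t)) ^ 2 - (-(px z x t) * ((ρ x t) ^ 2 + 1) ^ 2 + 8 * η * (px ρ x t * (1 - (ρ x t) ^ 2))) * (4 * (((ρ x t) ^ 2 + 1) * (ρ x t * pt ρ x t)) - 16 * η * (pt ρ x t * px ρ x t + ρ x t * pt (px ρ) x t)) * ((ρ x t) ^ 2 + 1) ^ 2 * (((ρ x t) ^ 2 + 1) ^ 2 - 16 * η * (ρ x t * px ρ x t)) - (-(16 * η) * (ρ x t * pt ρ x t)) * ((-(px (px z) x t) * ((ρ x t) ^ 2 + 1) ^ 2 - px z x t * (4 * (((ρ x t) ^ 2 + 1) * (ρ x t * px ρ x t))) + 8 * η * (px (px ρ) x t * (1 - (ρ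 x t) ^ 2) - 2 * ρ x t * (px ρ x t) ^ 2)) * ((ρ x t) ^ 2 + 1) ^ 2 * (((ρ x t) ^ 2 + 1) ^ 2 - 16 * η * (ρ x t * px ρ x t)) - (-(px z x t) * ((ρ x t) ^ 2 + 1) ^ 2 + 8 * η * (px ρ x t * (1 - (ρ x t) ^ 2))) * (4 * (((ρ x t) ^ 2 + 1) * (ρ x t * px ρ x t)) - 16 * η * ((px ρ x t) ^ 2 + ρ x t * px (px ρ) x t)) * ((ρ x t) ^ 2 + 1) ^ 2))
      = 1 / 2 * (-(z x t) * ((ρ x t) ^ 2 + 1) + 8 * η * ρ x t) ^ 2 * ((-(px (px z) x t) * ((ρ x t) ^ 2 + 1) ^ 2 - px z x t * (4 * (((ρ x t) ^ 2 + 1) * (ρ x t * px ρ x t))) + 8 * η * (px (px ρ) x t * (1 - (ρ x t) ^ 2) - 2 * ρ x t * (px ρ x t) ^ 2)) * ((ρ x t) ^ 2 + 1) ^ 2 * (((ρ x t) ^ 2 + 1) ^ 2 - 16 * η * (ρ x t * px ρ x t)) - (-(px z x t) * ((ρ x t) ^ 2 + 1) ^ 2 + 8 * η * (px ρ x t * (1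 - (ρ x t) ^ 2))) * (4 * (((ρ x t) ^ 2 + 1) * (ρ x t * px ρ x t)) - 16 * η * ((px ρ x t) ^ 2 + ρ x t * px (px ρ) x t)) * ((ρ x t) ^ 2 + 1) ^ 2) + ((ρ x t) ^ 2 + 1) * (-(z x t) * ((ρ x t) ^ 2 + 1) + 8 * η * ρ x t) * (-(px z x t) * ((ρ x t) ^ 2 + 1) ^ 2 + 8 * η * (px ρ x t * (1 - (ρ x t) ^ 2))) ^ 2 * (((ρ x t) ^ 2 + 1) ^ 2 - 16 * η * (ρ x t * px ρ x t)) + ((ρ x t) ^ 2 + 1) * (-(z x t) * ((ρ x t) ^ 2 + 1) + 8 * η * ρ x t) * (((ρ x t) ^ 2 + 1) ^ 2 - 16 * η * (ρ x t * px ρ x t)) ^ 3 := by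
    simp only [hrxx x t, hrxt x t, hsp x t, hρx x t, hρt x t]
    field_simp
    ring
  have hD : ((ρ x t) ^ 2 + 1) ^ 2 * (((ρ x t) ^ 2 + 1) ^ 2 - 16 * η * (ρ x t * px ρ x t)) ^ 3 ≠ 0 := mul_ne_zero (pow_ne_zero 2 (hA x t)) (pow_ne_zero 3 hNe)
  have goal2 : (((ρ x t) ^ 2 + 1) ^ 2 * (((ρ x t) ^ 2 + 1) ^ 2 - 16 * η * (ρ x t * px ρ x t)) ^ 3) * (pt (px w) (ξ x t) t)
      = (((ρ x t) ^ 2 + 1) ^ 2 * (((ρ x t) ^ 2 + 1) ^ 2 - 16 * η * (ρ x t * px ρ x t)) ^ 3) * (1 / 2 * (w (ξ x t) t) ^ 2 * (px (px w) (ξ x t) t) + (w (ξ x t) t) * (px w (ξ x t) t) ^ 2 + (w (ξ x t) t)) := by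
    linear_combination hc2 + key + (-(1 / 2) * (w (ξ x t) t * ((ρ x t) ^ 2 + 1)) ^ 2) * hb2
      + (-(1 / 2) * (w (ξ x t) t * ((ρ x t) ^ 2 + 1) + (-(z x t) * ((ρ x t) ^ 2 + 1) + 8 * η * ρ x t)) * ((-(px (px z) x t) * ((ρ x t) ^ 2 + 1) ^ 2 - px z x t * (4 * (((ρ x t) ^ 2 + 1) * (ρ x t * px ρ x t))) + 8 * η * (px (px ρ) x t * (1 - (ρ x t) ^ 2) - 2 * ρ x t * (px ρ x t) ^ 2)) * ((ρ x t) ^ 2 + 1) ^ 2 * (((ρ x t) ^ 2 + 1) ^ 2 - 16 * η * (ρ x t * px ρ x t)) - (-(px z x t) * ((ρ x t) ^ 2 + 1) ^ 2 + 8 * η * (px ρ x t * (1 - (ρ x t) ^ 2))) * (4 * (((ρ x t) ^ 2 + 1) * (ρ x t * px ρ x t)) - 16 * η * ((px ρ x t) ^ 2 + ρ x t * px (px ρ) x t)) * ((ρ x t) ^ 2 + 1) ^ 2)) * hW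
      + (-(((ρ x t) ^ 2 + 1) * (((ρ x t) ^ 2 + 1) ^ 2 - 16 * η * (ρ x t * px ρ x t))) * (w (ξ x t) t * ((ρ x t) ^ 2 + 1)) * (px w (ξ x t) t * (((ρ x t) ^ 2 + 1) ^ 2 - 16 * η * (ρ x t * px ρ x t)) + (-(px z x t) * ((ρ x t) ^ 2 + 1) ^ 2 + 8 * η * (px ρ x t * (1 - (ρ x t) ^ 2))))) * (K1 x t)
      + (-(((ρ x t) ^ 2 + 1) * (((ρ x t) ^ 2 + 1) ^ 2 - 16 * η * (ρ x t * px ρ x t)) * (-(px z x t) * ((ρ x t) ^ 2 + 1) ^ 2 + 8 * η * (px ρ x t * (1 - (ρ x t) ^ 2))) ^ 2 + ((ρ x t) ^ 2 + 1) * (((ρ x t) ^ 2 + 1) ^ 2 - 16 * η * (ρ x t * px ρ x t)) ^ 3)) * hW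
  have := mul_left_cancel₀ hD goal2
  linarith [this]
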